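/- Let k be a field, A an associative unital k-algebra that is smooth over k, n ≥ 1, and (A_V, π) a universal n-dimensional representation of A. Write Der_k(A_V) for the A_V-module of k-linear derivations A_V → A_V. Then there is a family of bijections Ψ_L, indexed by A_V-modules L, from the set of A-bimodule homomorphisms 𝔻er A → Mat_n(L) onto the set of A_V-linear maps Der_k(A_V) → L, natural in L: for every A_V-linear map h : L → L' and every A-bimodule homomorphism F : 𝔻er A → Mat_n(L), one has Ψ_{L'}(Mat_n(h) ∘ F) = h ∘ Ψ_L(F). This expresses the isomorphism (𝔻er A)_V ≅ Der(A_V): the Van den Bergh functor takes the bimodule of double derivations of A to the A_V-module of derivations of A_V. -/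

import Mathlib

/-!
STATEMENT 13: For a smooth `k`-algebra `A` with universal n-dimensional representation
`(A_V, π)`, there is a family of bijections, natural in the `A_V`-module `L`, between
`A`-bimodule homomorphisms `𝔻er A → Mat_n(L)` and `A_V`-linear maps `Der_k(A_V) → L`.
This expresses `(𝔻er A)_V ≅ Der(A_V)`.
-/

universe u

open TensorProduct

set_option synthInstance.maxHeartbeats 800000
set_option maxHeartbeats 1600000

section DoubleDerivations

variable (k : Type*) (A : Type*) [CommRing k] [Ring A] [Algebra k A]

/-- The `A`-bimodule `𝔻er A` of double derivations: `k`-linear maps `Θ : A → A ⊗ A`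
satisfying the Leibniz rule for the outer bimodule structure on `A ⊗ A`. -/
def DDer : Submodule k (A →ₗ[k] A ⊗[k] A) where
  carrier := {Θ | ∀ x y : A,
    Θ (x * y) = TensorProduct.map (LinearMap.mulLeft k x) LinearMap.id (Θ y)
      + TensorProduct.map LinearMap.id (LinearMap.mulRight k y) (Θ x)}
  add_mem' := by
    intro Θ₁ Θ₂ h1 h2 x y
    simp only [LinearMap.add_apply, h1 x y, h2 x y, map_add]
    abel
  zero_mem' := by intro x y; simp
  smul_mem' := by
    intro c Θ h x y
    simp only [LinearMap.smul_apply, h x y, map_smul, smul_add]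

variable {k A}

lemma commLL (a x : A) (u : A ⊗[k] A) :
    TensorProduct.map LinearMap.id (LinearMap.mulLeft k a)
        (TensorProduct.map (LinearMap.mulLeft k x) LinearMap.id u)
      = TensorProduct.map (LinearMap.mulLeft k x) LinearMap.id
        (TensorProduct.map LinearMap.id (LinearMap.mulLeft k a) u) := by
  induction u with
  | zero => simp
  | tmul p q => simp
  | add u v hu hv => simp [hu, hv]

lemma commLR (a y : A) (u : A ⊗[k] A) :
    TensorProduct.map LinearMap.id (LinearMap.mulLeft k a)
        (TensorProduct.map LinearMap.id (LinearMap.mulRight k y) u)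
      = TensorProduct.map LinearMap.id (LinearMap.mulRight k y)
        (TensorProduct.map LinearMap.id (LinearMap.mulLeft k a) u) := by
  induction u with
  | zero => simp
  | tmul p q => simp [mul_assoc]
  | add u v hu hv => simp [hu, hv]

lemma commRL (b x : A) (u : A ⊗[k] A) :
    TensorProduct.map (LinearMap.mulRight k b) LinearMap.id
        (TensorProduct.map (LinearMap.mulLeft k x) LinearMap.id u)
      = TensorProduct.map (LinearMap.mulLeft k x) LinearMap.id
        (TensorProduct.map (LinearMap.mulRight k b) LinearMap.id u) := by
  induction u with
  | zero => simp
  | tmul p q => simp [mul_assoc]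
  | add u v hu hv => simp [hu, hv]

lemma commRR (b y : A) (u : A ⊗[k] A) :
    TensorProduct.map (LinearMap.mulRight k b) LinearMap.id
        (TensorProduct.map LinearMap.id (LinearMap.mulRight k y) u)
      = TensorProduct.map LinearMap.id (LinearMap.mulRight k y)
        (TensorProduct.map (LinearMap.mulRight k b) LinearMap.id u) := by
  induction u with
  | zero => simp
  | tmul p q => simp
  | add u v hu hv => simp [hu, hv]

variable (k A)

/-- The left factor of the inner `A`-bimodule structure on `𝔻er A`:
`(a · Θ)(x) = Θ'(x) ⊗ a Θ''(x)`. -/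
noncomputable def innerDL (a : A) : DDer k A →ₗ[k] DDer k A :=
  (LinearMap.llcomp k A (A ⊗[k] A) (A ⊗[k] A)
      (TensorProduct.map LinearMap.id (LinearMap.mulLeft k a))).restrict
    (p := DDer k A) (q := DDer k A)
    (fun Θ hΘ => by
      intro x y
      simp only [LinearMap.llcomp_apply, LinearMap.coe_comp, Function.comp_apply,
        LinearMap.comp_apply]
      rw [hΘ x y, map_add, commLL, commLR])

/-- The right factor of the inner `A`-bimodule structure on `𝔻er A`:
`(Θ · b)(x) = Θ'(x) b ⊗ Θ''(x)`. -/
noncomputable def innerDR (b : A) : DDer k A →ₗ[k] DDer k A :=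
  (LinearMap.llcomp k A (A ⊗[k] A) (A ⊗[k] A)
      (TensorProduct.map (LinearMap.mulRight k b) LinearMap.id)).restrict
    (p := DDer k A) (q := DDer k A)
    (fun Θ hΘ => by
      intro x y
      simp only [LinearMap.llcomp_apply, LinearMap.coe_comp, Function.comp_apply,
        LinearMap.comp_apply]
      rw [hΘ x y, map_add, commRL, commRR])

/-- The enveloping algebra `A^e = A ⊗ₖ Aᵐᵒᵖ` acts on `A` by `(a ⊗ bᵒᵖ) · x = a x b`.
Under `x ⊗ y ↦ x ⊗ yᵒᵖ`, this is the outer bimodule structure of the text. -/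
noncomputable instance envModule : Module (A ⊗[k] Aᵐᵒᵖ) A :=
  TensorProduct.Algebra.module

/-- The multiplication map `A^e → A`, `a ⊗ bᵒᵖ ↦ a b`, as a map of `A^e`-modules; its
kernel is the `A^e`-module `Ω¹_nc A` of noncommutative 1-forms. -/
noncomputable def envMul : (A ⊗[k] Aᵐᵒᵖ) →ₗ[A ⊗[k] Aᵐᵒᵖ] A :=
  LinearMap.toSpanSingleton (A ⊗[k] Aᵐᵒᵖ) A (1 : A)

end DoubleDerivations

section VdB

variable (k : Type u) [Field k]

/-- Left action of a matrix over `C` on a matrix with entries in a `C`-module: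
`(P · X)_{ij} = Σ_l P_{il} • X_{lj}`. -/
def matLSmul {C N : Type*} [CommRing C] [AddCommGroup N] [Module C N] {n : ℕ}
    (P : Matrix (Fin n) (Fin n) C) (X : Matrix (Fin n) (Fin n) N) :
    Matrix (Fin n) (Fin n) N :=
  Matrix.of fun i j => ∑ l : Fin n, P i l • X l j

/-- Right action of a matrix over `C` on a matrix with entries in a `C`-module:
`(X · P)_{ij} = Σ_l P_{lj} • X_{il}`. -/
def matRSmul {C N : Type*} [CommRing C] [AddCommGroup N] [Module C N] {n : ℕ}
    (X : Matrix (Fin n) (Fin n) N) (P : Matrix (Fin n) (Fin n) C) :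
    Matrix (Fin n) (Fin n) N :=
  Matrix.of fun i j => ∑ l : Fin n, P l j • X i l

lemma map_matLSmul {C L L' : Type*} [CommRing C] [AddCommGroup L] [Module C L]
    [AddCommGroup L'] [Module C L'] (h : L →ₗ[C] L') {n : ℕ}
    (P : Matrix (Fin n) (Fin n) C) (X : Matrix (Fin n) (Fin n) L) :
    (matLSmul P X).map ⇑h = matLSmul P (X.map ⇑h) := by
  ext i j
  simp [matLSmul, Matrix.map_apply, map_sum]

lemma map_matRSmul {C L L' : Type*} [CommRing C] [AddCommGroup L] [Module C L]
    [AddCommGroup L'] [Module C L'] (h : L →ₗ[C] L') {n : ℕ}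
    (P : Matrix (Fin n) (Fin n) C) (X : Matrix (Fin n) (Fin n) L) :
    (matRSmul X P).map ⇑h = matRSmul (X.map ⇑h) P := by
  ext i j
  simp [matRSmul, Matrix.map_apply, map_sum]

/-- A bundled module over the commutative `k`-algebra `C`. -/
structure ModPkg (C : Type u) [CommRing C] [Algebra k C] : Type (u + 1) where
  carrier : Type u
  [acgInst : AddCommGroup carrier]
  [modkInst : Module k carrier]
  [modCInst : Module C carrier]
  [towerInst : IsScalarTower k C carrier]

attribute [instance] ModPkg.acgInst ModPkg.modkInst ModPkg.modCInst ModPkg.towerInst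

variable {k}
variable {A : Type u} [Ring A] [Algebra k A] {n : ℕ}
variable {AV : Type u} [CommRing AV] [Algebra k AV]

/-- `F : 𝔻er A → Mat_n(L)` is an `A`-bimodule homomorphism, where `Mat_n(L)` carries the
`A`-bimodule structure `a · X · b = π(a) X π(b)` induced by `π`. -/
def IsVdBHom (π : A →ₐ[k] Matrix (Fin n) (Fin n) AV) (L : ModPkg k AV)
    (F : DDer k A →ₗ[k] Matrix (Fin n) (Fin n) L.carrier) : Prop :=
  (∀ (a : A) (Θ : DDer k A), F (innerDL k A a Θ) = matLSmul (π a) (F Θ)) ∧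
  (∀ (b : A) (Θ : DDer k A), F (innerDR k A b Θ) = matRSmul (F Θ) (π b))

/-- Post-composition with `Mat_n(h)`, for `h : L → L'` an `A_V`-linear map, sends
`A`-bimodule homomorphisms `𝔻er A → Mat_n(L)` to `A`-bimodule homomorphisms
`𝔻er A → Mat_n(L')`. -/
noncomputable def pushVdB (π : A →ₐ[k] Matrix (Fin n) (Fin n) AV) {L L' : ModPkg k AV}
    (h : L.carrier →ₗ[AV] L'.carrier)
    (F : {F : DDer k A →ₗ[k] Matrix (Fin n) (Fin n) L.carrier // IsVdBHom π L F}) :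
    {F' : DDer k A →ₗ[k] Matrix (Fin n) (Fin n) L'.carrier // IsVdBHom π L' F'} :=
  ⟨((h.restrictScalars k).mapMatrix).comp F.1, by
    constructor
    · intro a Θ
      simp only [LinearMap.comp_apply, LinearMap.mapMatrix_apply,
        LinearMap.coe_restrictScalars]
      rw [F.2.1 a Θ, map_matLSmul]
    · intro b Θ
      simp only [LinearMap.comp_apply, LinearMap.mapMatrix_apply,
        LinearMap.coe_restrictScalars]
      rw [F.2.2 b Θ, map_matRSmul]⟩

end VdB


section KRAux

open MulOpposite

variable (k : Type u) [Field k] (A : Type u) [Ring A] [Algebra k A]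

/-- `τ : A ⊗ A ≃ A ⊗ Aᵐᵒᵖ`. -/
noncomputable def tauEnv : (A ⊗[k] A) ≃ₗ[k] (A ⊗[k] Aᵐᵒᵖ) :=
  TensorProduct.congr (LinearEquiv.refl k A) (opLinearEquiv k)

@[simp] lemma tauEnv_tmul (u v : A) : tauEnv k A (u ⊗ₜ v) = u ⊗ₜ op v := rfl

/-- `δ a = a ⊗ 1 - 1 ⊗ aᵒᵖ`. -/
noncomputable def delL : A →ₗ[k] (A ⊗[k] Aᵐᵒᵖ) :=
  ((TensorProduct.mk k A Aᵐᵒᵖ).flip (op 1)) -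
    (TensorProduct.mk k A Aᵐᵒᵖ 1) ∘ₗ (opLinearEquiv k).toLinearMap

lemma delL_apply (a : A) : delL k A a = a ⊗ₜ op 1 - 1 ⊗ₜ op a := rfl

lemma envMul_tmul (a b : A) : envMul k A (a ⊗ₜ op b) = a * b := by
  show (a ⊗ₜ[k] op b) • (1 : A) = a * b
  show a • (op b) • (1 : A) = a * b
  rw [MulOpposite.smul_eq_mul_unop, smul_eq_mul]
  simp

lemma delL_mem_ker (a : A) : delL k A a ∈ LinearMap.ker (envMul k A) := by
  rw [LinearMap.mem_ker, delL_apply, map_sub, envMul_tmul, envMul_tmul]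
  simp

lemma delL_leibniz (x y : A) :
    delL k A (x * y) = (x ⊗ₜ op 1) * delL k A y + (1 ⊗ₜ op y) * delL k A x := by
  simp only [delL_apply, mul_sub, Algebra.TensorProduct.tmul_mul_tmul,
    mul_one, one_mul, op_mul, op_one]
  have : (op y : Aᵐᵒᵖ) * op x = op (x * y) := rfl
  rw [this]
  abel

lemma sub_one_tmul_eq (u v : A) :
    u ⊗ₜ[k] op v - 1 ⊗ₜ op (u * v) = (1 ⊗ₜ op v) * delL k A u := by
  simp only [delL_apply, mul_sub, Algebra.TensorProduct.tmul_mul_tmul, one_mul, mul_one]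
  have h1 : (op v : Aᵐᵒᵖ) * op 1 = op v := by simp
  have h2 : (op v : Aᵐᵒᵖ) * op u = op (u * v) := rfl
  rw [h1, h2]

lemma mem_span_delL (ρ : A ⊗[k] Aᵐᵒᵖ) :
    ρ - 1 ⊗ₜ op (envMul k A ρ) ∈
      Submodule.span (A ⊗[k] Aᵐᵒᵖ) (Set.range (delL k A)) := by
  induction ρ using TensorProduct.induction_on with
  | zero => simp
  | tmul u v =>
    rw [show (u ⊗ₜ[k] v) = u ⊗ₜ op (unop v) by simp, envMul_tmul, sub_one_tmul_eq]
    exact Submodule.smul_mem _ _ (Submodule.subset_span ⟨u, rfl⟩)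
  | add ρ₁ ρ₂ h1 h2 =>
    have : ρ₁ + ρ₂ - 1 ⊗ₜ op (envMul k A (ρ₁ + ρ₂))
        = (ρ₁ - 1 ⊗ₜ op (envMul k A ρ₁)) + (ρ₂ - 1 ⊗ₜ op (envMul k A ρ₂)) := by
      rw [map_add, op_add, TensorProduct.tmul_add]; abel
    rw [this]
    exact Submodule.add_mem _ h1 h2

lemma ker_le_span_delL :
    LinearMap.ker (envMul k A) ≤
      Submodule.span (A ⊗[k] Aᵐᵒᵖ) (Set.range (delL k A)) := by
  intro ω hω
  have := mem_span_delL k A ω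
  rwa [LinearMap.mem_ker.mp hω, op_zero, TensorProduct.tmul_zero, sub_zero] at this

lemma delL_mem_span_finset (s : Finset A) (hs : Algebra.adjoin k (s : Set A) = ⊤) (a : A) :
    delL k A a ∈ Submodule.span (A ⊗[k] Aᵐᵒᵖ) (delL k A '' s) := by
  have ha : a ∈ Algebra.adjoin k (s : Set A) := hs ▸ Algebra.mem_top
  induction ha using Algebra.adjoin_induction with
  | mem x hx => exact Submodule.subset_span ⟨x, hx, rfl⟩
  | algebraMap c =>
    have : delL k A (algebraMap k A c) = 0 := by
      rw [delL_apply, Algebra.algebraMap_eq_smul_one]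
      rw [show (op ((c : k) • (1:A)) : Aᵐᵒᵖ) = c • op 1 by simp]
      rw [TensorProduct.smul_tmul]
      exact sub_self _
    rw [this]; exact Submodule.zero_mem _
  | add x y hx hy hx' hy' => rw [map_add]; exact Submodule.add_mem _ hx' hy'
  | mul x y hx hy hx' hy' =>
    rw [delL_leibniz]
    exact Submodule.add_mem _ (Submodule.smul_mem _ _ hy') (Submodule.smul_mem _ _ hx')

lemma omega_finite [Algebra.FiniteType k A] :
    Module.Finite (A ⊗[k] Aᵐᵒᵖ) (LinearMap.ker (envMul k A)) := by
  obtain ⟨s, hs⟩ := (‹Algebra.FiniteType k A›).out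
  rw [Module.Finite.iff_fg, Submodule.fg_def]
  refine ⟨delL k A '' s, (s.finite_toSet).image _, le_antisymm ?_ ?_⟩
  · exact Submodule.span_le.mpr (by rintro _ ⟨a, _, rfl⟩; exact delL_mem_ker k A a)
  · intro ω hω
    refine Submodule.span_le.mpr ?_ (ker_le_span_delL k A hω)
    rintro _ ⟨a, rfl⟩
    exact delL_mem_span_finset k A s hs a

end KRAux

section KRAuxB

open MulOpposite

variable (k : Type u) [Field k] (A : Type u) [Ring A] [Algebra k A]

lemma tauEnv_map_mulLeft (x : A) (u : A ⊗[k] A) :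
    tauEnv k A (TensorProduct.map (LinearMap.mulLeft k x) LinearMap.id u)
      = (x ⊗ₜ op 1) * tauEnv k A u := by
  induction u with
  | zero => simp
  | tmul p q => simp [Algebra.TensorProduct.tmul_mul_tmul]
  | add u v hu hv => simp [map_add, hu, hv, mul_add]

lemma tauEnv_map_mulRight (y : A) (u : A ⊗[k] A) :
    tauEnv k A (TensorProduct.map LinearMap.id (LinearMap.mulRight k y) u)
      = (1 ⊗ₜ op y) * tauEnv k A u := by
  induction u with
  | zero => simp
  | tmul p q =>
    simp only [TensorProduct.map_tmul, LinearMap.id_coe, id_eq, LinearMap.mulRight_apply,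
      tauEnv_tmul, Algebra.TensorProduct.tmul_mul_tmul, one_mul]
    congr 1
  | add u v hu hv => simp [map_add, hu, hv, mul_add]

/-- `δ` corestricted to `Ω = ker (envMul)`. -/
noncomputable def delOmega : A →ₗ[k] (LinearMap.ker (envMul k A)) where
  toFun a := ⟨delL k A a, delL_mem_ker k A a⟩
  map_add' a b := by ext; simp
  map_smul' c a := by ext; simp

lemma delOmega_leibniz (x y : A) :
    delOmega k A (x * y) = ((x ⊗ₜ[k] op 1 : A ⊗[k] Aᵐᵒᵖ)) • delOmega k A y
      + ((1 ⊗ₜ[k] op y : A ⊗[k] Aᵐᵒᵖ)) • delOmega k A x := by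
  apply Subtype.ext
  simp only [delOmega, LinearMap.coe_mk, AddHom.coe_mk, Submodule.coe_add, SetLike.val_smul,
    smul_eq_mul]
  exact delL_leibniz k A x y

/-- The double derivation associated to an element of `Hom_{Aᵉ}(Ω, Aᵉ)`. -/
noncomputable def dualToDDerMap (f : (LinearMap.ker (envMul k A)) →ₗ[A ⊗[k] Aᵐᵒᵖ] (A ⊗[k] Aᵐᵒᵖ)) :
    A →ₗ[k] A ⊗[k] A :=
  (tauEnv k A).symm.toLinearMap ∘ₗ (f.restrictScalars k) ∘ₗ delOmega k A

lemma tauEnv_dualToDDerMap (f : (LinearMap.ker (envMul k A)) →ₗ[A ⊗[k] Aᵐᵒᵖ] (A ⊗[k] Aᵐᵒᵖ))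
    (a : A) : tauEnv k A (dualToDDerMap k A f a) = f (delOmega k A a) := by
  simp [dualToDDerMap]

lemma dualToDDerMap_mem (f : (LinearMap.ker (envMul k A)) →ₗ[A ⊗[k] Aᵐᵒᵖ] (A ⊗[k] Aᵐᵒᵖ)) :
    dualToDDerMap k A f ∈ DDer k A := by
  intro x y
  apply (tauEnv k A).injective
  rw [map_add, tauEnv_map_mulLeft, tauEnv_map_mulRight]
  rw [tauEnv_dualToDDerMap, tauEnv_dualToDDerMap, tauEnv_dualToDDerMap]
  rw [delOmega_leibniz, map_add, map_smul, map_smul]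
  simp [smul_eq_mul]

/-- Finite dual basis for the projective module `Ω`. -/
lemma exists_dual_basis [Algebra.FiniteType k A]
    (hsmooth : Module.Projective (A ⊗[k] Aᵐᵒᵖ) (LinearMap.ker (envMul k A))) :
    ∃ (m : ℕ) (ω : Fin m → (LinearMap.ker (envMul k A)))
      (f : Fin m → ((LinearMap.ker (envMul k A)) →ₗ[A ⊗[k] Aᵐᵒᵖ] (A ⊗[k] Aᵐᵒᵖ))),
      ∀ x : (LinearMap.ker (envMul k A)), ∑ s, f s x • ω s = x := by
  have : Module.Finite (A ⊗[k] Aᵐᵒᵖ) (LinearMap.ker (envMul k A)) := omega_finite k A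
  obtain ⟨m, g, hg⟩ := Module.Finite.exists_fin' (A ⊗[k] Aᵐᵒᵖ) (LinearMap.ker (envMul k A))
  obtain ⟨h, hh⟩ := Module.projective_lifting_property g LinearMap.id hg
  refine ⟨m, fun s => g (Pi.single s 1), fun s => (LinearMap.proj s) ∘ₗ h, fun x => ?_⟩
  have : ∀ s, (h x s) • g (Pi.single s 1) = g (Pi.single s (h x s)) := by
    intro s
    rw [← map_smul]
    congr 1
    ext t
    by_cases hst : s = t
    · subst hst; simp
    · simp [Pi.single_apply, hst]
  simp only [LinearMap.comp_apply, LinearMap.proj_apply, this]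
  rw [← map_sum]
  rw [Finset.univ_sum_single (h x)]
  have hx : g (h x) = x := by rw [← LinearMap.comp_apply, hh]; rfl
  exact hx
end KRAuxB

section KRAuxC

open MulOpposite

variable {k : Type u} [Field k] {A : Type u} [Ring A] [Algebra k A]
variable {n : ℕ} {AV : Type u} [CommRing AV] [Algebra k AV]
variable (π : A →ₐ[k] Matrix (Fin n) (Fin n) AV)

/-- `matE π p q (u ⊗ v) i j = π(u)_{iq} π(v)_{pj}`. -/
noncomputable def matE (p q : Fin n) : (A ⊗[k] A) →ₗ[k] Matrix (Fin n) (Fin n) AV :=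
  TensorProduct.lift (LinearMap.mk₂ k
    (fun u v => Matrix.of fun i j => π u i q * π v p j)
    (fun u₁ u₂ v => by ext i j; simp [add_mul])
    (fun c u v => by ext i j; simp [map_smul, Matrix.smul_apply, smul_mul_assoc])
    (fun u v₁ v₂ => by ext i j; simp [mul_add])
    (fun c u v => by ext i j; simp [map_smul, Matrix.smul_apply, mul_smul_comm]))

lemma matE_tmul (p q : Fin n) (u v : A) (i j : Fin n) :
    matE π p q (u ⊗ₜ v) i j = π u i q * π v p j := rfl

lemma matE_map_mulLeft (p q : Fin n) (a : A) (u : A ⊗[k] A) :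
    matE π p q (TensorProduct.map (LinearMap.mulLeft k a) LinearMap.id u)
      = π a * matE π p q u := by
  induction u with
  | zero => simp
  | tmul x y => ext i j; simp [matE_tmul, Matrix.mul_apply, map_mul, Finset.sum_mul, mul_assoc]
  | add u v hu hv => simp [map_add, hu, hv, mul_add]

lemma matE_map_mulRight (p q : Fin n) (b : A) (u : A ⊗[k] A) :
    matE π p q (TensorProduct.map LinearMap.id (LinearMap.mulRight k b) u)
      = matE π p q u * π b := by
  induction u with
  | zero => simp
  | tmul x y =>
    ext i j
    simp [matE_tmul, Matrix.mul_apply, map_mul, Finset.mul_sum, mul_assoc]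
  | add u v hu hv => simp [map_add, hu, hv, add_mul]

lemma matE_inner_left (p q : Fin n) (a : A) (u : A ⊗[k] A) :
    matE π p q (TensorProduct.map LinearMap.id (LinearMap.mulLeft k a) u)
      = ∑ l, π a p l • matE π l q u := by
  induction u with
  | zero => simp
  | tmul x y =>
    ext i j
    simp only [TensorProduct.map_tmul, LinearMap.id_coe, id_eq, LinearMap.mulLeft_apply,
      matE_tmul, map_mul, Matrix.mul_apply, Matrix.sum_apply, Matrix.smul_apply,
      smul_eq_mul, Finset.mul_sum]
    refine Finset.sum_congr rfl fun l _ => ?_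
    ring
  | add u v hu hv => simp [map_add, hu, hv, Finset.sum_add_distrib, smul_add]

lemma matE_inner_right (p q : Fin n) (c : A) (u : A ⊗[k] A) :
    matE π p q (TensorProduct.map (LinearMap.mulRight k c) LinearMap.id u)
      = ∑ l, π c l q • matE π p l u := by
  induction u with
  | zero => simp
  | tmul x y =>
    ext i j
    simp only [TensorProduct.map_tmul, LinearMap.id_coe, id_eq, LinearMap.mulRight_apply,
      matE_tmul, map_mul, Matrix.mul_apply, Matrix.sum_apply, Matrix.smul_apply,
      smul_eq_mul, Finset.sum_mul]
    refine Finset.sum_congr rfl fun l _ => ?_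
    ring
  | add u v hu hv => simp [map_add, hu, hv, Finset.sum_add_distrib, smul_add]

/-- Entrywise application of a derivation to a matrix. -/
noncomputable def matDeriv (D : Derivation k AV AV) :
    Matrix (Fin n) (Fin n) AV →ₗ[k] Matrix (Fin n) (Fin n) AV :=
  LinearMap.mapMatrix (D : AV →ₗ[k] AV)

lemma matDeriv_apply (D : Derivation k AV AV) (P : Matrix (Fin n) (Fin n) AV) (i j : Fin n) :
    matDeriv D P i j = D (P i j) := rfl

lemma matDeriv_mul (D : Derivation k AV AV) (P Q : Matrix (Fin n) (Fin n) AV) :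
    matDeriv D (P * Q) = P * matDeriv D Q + matDeriv D P * Q := by
  ext i j
  simp only [matDeriv_apply, Matrix.mul_apply, Matrix.add_apply, map_sum]
  rw [← Finset.sum_add_distrib]
  congr 1; ext l
  rw [Derivation.leibniz]
  simp [smul_eq_mul, mul_comm]

lemma matDeriv_one (D : Derivation k AV AV) :
    matDeriv D (1 : Matrix (Fin n) (Fin n) AV) = 0 := by
  ext i j
  simp only [matDeriv_apply, Matrix.one_apply, Matrix.zero_apply]
  split <;> simp

/-- The sandwich action `ζ(a ⊗ bᵒᵖ)(X) = π(a) X π(b)`. -/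
noncomputable def zetaS : (A ⊗[k] Aᵐᵒᵖ) →ₗ[k]
    Matrix (Fin n) (Fin n) AV →ₗ[k] Matrix (Fin n) (Fin n) AV :=
  TensorProduct.lift (LinearMap.mk₂ k
    (fun a b => (LinearMap.mulLeft k (π a)) ∘ₗ (LinearMap.mulRight k (π (unop b))))
    (fun a₁ a₂ b => by
      refine LinearMap.ext fun X => ?_
      simp [map_add, add_mul])
    (fun c a b => by
      refine LinearMap.ext fun X => ?_
      simp [map_smul, smul_mul_assoc])
    (fun a b₁ b₂ => by
      refine LinearMap.ext fun X => ?_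
      simp [map_add, mul_add])
    (fun c a b => by
      refine LinearMap.ext fun X => ?_
      simp [map_smul, mul_smul_comm]))

lemma zetaS_tmul (a : A) (b : Aᵐᵒᵖ) (X : Matrix (Fin n) (Fin n) AV) :
    zetaS π (a ⊗ₜ b) X = π a * X * π (unop b) := by
  simp [zetaS, mul_assoc]

lemma zetaS_mul (r r' : A ⊗[k] Aᵐᵒᵖ) (X : Matrix (Fin n) (Fin n) AV) :
    zetaS π (r * r') X = zetaS π r (zetaS π r' X) := by
  induction r with
  | zero => simp
  | add r₁ r₂ h1 h2 => simp [add_mul, map_add, h1, h2]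
  | tmul a b =>
    induction r' with
    | zero => simp
    | add s₁ s₂ h1 h2 => simp [mul_add, map_add, h1, h2]
    | tmul c e =>
      rw [Algebra.TensorProduct.tmul_mul_tmul, zetaS_tmul, zetaS_tmul, zetaS_tmul]
      simp only [unop_mul, map_mul, unop_op]
      noncomm_ring

/-- `φ_D(u ⊗ vᵒᵖ) = D(π u) ⬝ π v`, entrywise derivative. -/
noncomputable def phiD (D : Derivation k AV AV) :
    (A ⊗[k] Aᵐᵒᵖ) →ₗ[k] Matrix (Fin n) (Fin n) AV :=
  TensorProduct.lift (LinearMap.mk₂ k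
    (fun u v => matDeriv D (π u) * π (unop v))
    (fun u₁ u₂ v => by simp [map_add, add_mul])
    (fun c u v => by simp [map_smul, smul_mul_assoc])
    (fun u v₁ v₂ => by simp [map_add, mul_add])
    (fun c u v => by simp [map_smul, Matrix.mul_smul]))

lemma phiD_tmul (D : Derivation k AV AV) (u : A) (v : Aᵐᵒᵖ) :
    phiD π D (u ⊗ₜ v) = matDeriv D (π u) * π (unop v) := rfl

lemma phiD_delL (D : Derivation k AV AV) (a : A) :
    phiD π D (delL k A a) = matDeriv D (π a) := by
  rw [delL_apply, map_sub, phiD_tmul, phiD_tmul]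
  simp [matDeriv_one]

lemma phiD_key (D : Derivation k AV AV) (r : A ⊗[k] Aᵐᵒᵖ)
    (ω : A ⊗[k] Aᵐᵒᵖ) (hω : ω ∈ LinearMap.ker (envMul k A)) :
    phiD π D (r * ω) = zetaS π r (phiD π D ω) := by
  -- the set of `ω` for which the claim holds for all `r` is an `R`-submodule containing `δa`
  let S : Submodule (A ⊗[k] Aᵐᵒᵖ) (A ⊗[k] Aᵐᵒᵖ) :=
    { carrier := {ρ | ∀ r, phiD π D (r * ρ) = zetaS π r (phiD π D ρ)}
      add_mem' := fun h1 h2 r => by simp [mul_add, map_add, h1 r, h2 r]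
      zero_mem' := fun r => by simp
      smul_mem' := fun r' ρ hρ r => by
        simp only [smul_eq_mul, ← mul_assoc]
        rw [hρ (r * r'), zetaS_mul, hρ r'] }
  have key : ∀ (a c : A) (e : Aᵐᵒᵖ),
      phiD π D ((c ⊗ₜ[k] e) * delL k A a)
        = zetaS π (c ⊗ₜ[k] e) (phiD π D (delL k A a)) := by
    intro a c e
    rw [phiD_delL, zetaS_tmul]
    rw [delL_apply, mul_sub, map_sub]
    simp only [Algebra.TensorProduct.tmul_mul_tmul, mul_one, one_mul, op_one]
    rw [phiD_tmul, phiD_tmul, map_mul, matDeriv_mul]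
    have he : unop ((e : Aᵐᵒᵖ) * op a) = a * unop e := rfl
    rw [he, map_mul]
    noncomm_ring
  have hδ : ∀ a : A, delL k A a ∈ S := by
    intro a
    show ∀ r, phiD π D (r * delL k A a) = zetaS π r (phiD π D (delL k A a))
    intro r
    induction r with
    | zero => simp
    | tmul c e => exact key a c e
    | add r₁ r₂ h1 h2 => simp [add_mul, map_add, h1, h2]
  have hspan : LinearMap.ker (envMul k A) ≤ S := by
    refine le_trans (ker_le_span_delL k A) (Submodule.span_le.mpr ?_)
    rintro _ ⟨a, rfl⟩
    exact hδ a
  exact hspan hω r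

end KRAuxC

section KRAuxC2

open MulOpposite

variable {k : Type u} [Field k] {A : Type u} [Ring A] [Algebra k A]
variable {n : ℕ} {AV : Type u} [CommRing AV] [Algebra k AV]
variable (π : A →ₐ[k] Matrix (Fin n) (Fin n) AV)

lemma zetaS_tau (u : A ⊗[k] A) (X : Matrix (Fin n) (Fin n) AV) :
    zetaS π (tauEnv k A u) X = ∑ p, ∑ q, X q p • matE π p q u := by
  induction u with
  | zero => simp
  | add u v hu hv =>
    simp only [map_add, LinearMap.add_apply, hu, hv, ← Finset.sum_add_distrib, smul_add]
  | tmul x y =>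
    rw [tauEnv_tmul, zetaS_tmul]
    ext i j
    simp only [Matrix.sum_apply, Matrix.smul_apply, matE_tmul, smul_eq_mul, unop_op,
      Matrix.mul_apply]
    simp only [Finset.sum_mul]
    refine Finset.sum_congr rfl fun p _ => Finset.sum_congr rfl fun q _ => ?_
    ring

/-- Double derivations kill `1`. -/
lemma dder_one (Θ : A →ₗ[k] A ⊗[k] A) (hΘ : Θ ∈ DDer k A) : Θ 1 = 0 := by
  have := hΘ 1 1
  simp only [mul_one] at this
  have h2 : TensorProduct.map (LinearMap.mulLeft k (1:A)) LinearMap.id (Θ 1) = Θ 1 := by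
    rw [show (LinearMap.mulLeft k (1:A)) = LinearMap.id by ext; simp]
    rw [TensorProduct.map_id]; rfl
  have h3 : TensorProduct.map LinearMap.id (LinearMap.mulRight k (1:A)) (Θ 1) = Θ 1 := by
    rw [show (LinearMap.mulRight k (1:A)) = LinearMap.id by ext; simp]
    rw [TensorProduct.map_id]; rfl
  rw [h2, h3] at this
  have := this.symm
  rw [← sub_eq_zero] at this
  simpa [add_sub_cancel_right] using this

/-- `h_Θ(u ⊗ vᵒᵖ) = (1 ⊗ vᵒᵖ) · τ(Θ u)`. -/
noncomputable def hTheta (Θ : A →ₗ[k] A ⊗[k] A) : (A ⊗[k] Aᵐᵒᵖ) →ₗ[k] (A ⊗[k] Aᵐᵒᵖ) :=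
  TensorProduct.lift (LinearMap.mk₂ k
    (fun u v => (1 ⊗ₜ[k] v) * tauEnv k A (Θ u))
    (fun u₁ u₂ v => by simp [map_add, mul_add])
    (fun c u v => by simp [map_smul, mul_smul_comm])
    (fun u v₁ v₂ => by simp [TensorProduct.tmul_add, add_mul])
    (fun c u v => by simp [TensorProduct.tmul_smul, smul_mul_assoc]))

lemma hTheta_tmul (Θ : A →ₗ[k] A ⊗[k] A) (u : A) (v : Aᵐᵒᵖ) :
    hTheta Θ (u ⊗ₜ v) = (1 ⊗ₜ[k] v) * tauEnv k A (Θ u) := rfl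

lemma tau_leibniz (Θ : A →ₗ[k] A ⊗[k] A) (hΘ : Θ ∈ DDer k A) (x y : A) :
    tauEnv k A (Θ (x * y)) = (x ⊗ₜ[k] op 1) * tauEnv k A (Θ y)
      + (1 ⊗ₜ[k] op y) * tauEnv k A (Θ x) := by
  rw [hΘ x y, map_add, tauEnv_map_mulLeft, tauEnv_map_mulRight]

lemma hTheta_delL (Θ : A →ₗ[k] A ⊗[k] A) (hΘ : Θ ∈ DDer k A) (a : A) :
    hTheta Θ (delL k A a) = tauEnv k A (Θ a) := by
  rw [delL_apply, map_sub, hTheta_tmul, hTheta_tmul, dder_one Θ hΘ]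
  have h1 : ((1:A) ⊗ₜ[k] (op (1:A))) = (1 : A ⊗[k] Aᵐᵒᵖ) := rfl
  rw [map_zero, mul_zero, sub_zero, h1, one_mul]

lemma hTheta_key (Θ : A →ₗ[k] A ⊗[k] A) (hΘ : Θ ∈ DDer k A) (r : A ⊗[k] Aᵐᵒᵖ)
    (ω : A ⊗[k] Aᵐᵒᵖ) (hω : ω ∈ LinearMap.ker (envMul k A)) :
    hTheta Θ (r * ω) = r * hTheta Θ ω := by
  let S : Submodule (A ⊗[k] Aᵐᵒᵖ) (A ⊗[k] Aᵐᵒᵖ) :=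
    { carrier := {ρ | ∀ r, hTheta Θ (r * ρ) = r * hTheta Θ ρ}
      add_mem' := fun h1 h2 r => by simp [mul_add, map_add, h1 r, h2 r]
      zero_mem' := fun r => by simp
      smul_mem' := fun r' ρ hρ r => by
        simp only [smul_eq_mul, ← mul_assoc]
        rw [hρ (r * r'), hρ r', mul_assoc] }
  have key : ∀ (a c : A) (e : Aᵐᵒᵖ),
      hTheta Θ ((c ⊗ₜ[k] e) * delL k A a)
        = (c ⊗ₜ[k] e) * hTheta Θ (delL k A a) := by
    intro a c e
    rw [hTheta_delL Θ hΘ]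
    rw [delL_apply, mul_sub, map_sub]
    simp only [Algebra.TensorProduct.tmul_mul_tmul, mul_one, one_mul, op_one]
    rw [hTheta_tmul, hTheta_tmul]
    rw [show (c * a) = c * a from rfl, tau_leibniz Θ hΘ c a]
    rw [mul_add]
    have h1 : ((1:A) ⊗ₜ[k] e) * ((c ⊗ₜ[k] op 1) * tauEnv k A (Θ a))
        = (c ⊗ₜ[k] e) * tauEnv k A (Θ a) := by
      rw [← mul_assoc, Algebra.TensorProduct.tmul_mul_tmul]
      simp
    have h2 : ((1:A) ⊗ₜ[k] e) * (((1:A) ⊗ₜ[k] op a) * tauEnv k A (Θ c))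
        = ((1:A) ⊗ₜ[k] (e * op a)) * tauEnv k A (Θ c) := by
      rw [← mul_assoc, Algebra.TensorProduct.tmul_mul_tmul, one_mul]
    rw [h1, h2]
    abel
  have hδ : ∀ a : A, delL k A a ∈ S := by
    intro a
    show ∀ r, hTheta Θ (r * delL k A a) = r * hTheta Θ (delL k A a)
    intro r
    induction r with
    | zero => simp
    | tmul c e => exact key a c e
    | add r₁ r₂ h1 h2 => simp [add_mul, map_add, h1, h2]
  have hspan : LinearMap.ker (envMul k A) ≤ S := by
    refine le_trans (ker_le_span_delL k A) (Submodule.span_le.mpr ?_)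
    rintro _ ⟨a, rfl⟩
    exact hδ a
  exact hspan hω r

/-- The inner action of `Aᵉ` on double derivations, `(𝔦 r Θ)(x) = τ⁻¹(τ(Θ x) · r)`. -/
noncomputable def ddInner (r : A ⊗[k] Aᵐᵒᵖ) (Θ : A →ₗ[k] A ⊗[k] A) : A →ₗ[k] A ⊗[k] A :=
  (tauEnv k A).symm.toLinearMap ∘ₗ (LinearMap.mulRight k r) ∘ₗ (tauEnv k A).toLinearMap ∘ₗ Θ

lemma ddInner_apply (r : A ⊗[k] Aᵐᵒᵖ) (Θ : A →ₗ[k] A ⊗[k] A) (a : A) :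
    ddInner r Θ a = (tauEnv k A).symm (tauEnv k A (Θ a) * r) := rfl

lemma ddInner_tmul (c e : A) (w : A ⊗[k] A) :
    (tauEnv k A).symm (tauEnv k A w * (c ⊗ₜ[k] op e))
      = TensorProduct.map LinearMap.id (LinearMap.mulLeft k e)
          (TensorProduct.map (LinearMap.mulRight k c) LinearMap.id w) := by
  induction w with
  | zero => simp
  | add u v hu hv => simp [map_add, add_mul, hu, hv]
  | tmul x y =>
    simp only [tauEnv_tmul, Algebra.TensorProduct.tmul_mul_tmul, TensorProduct.map_tmul,
      LinearMap.id_coe, id_eq, LinearMap.mulRight_apply, LinearMap.mulLeft_apply]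
    have : (op y : Aᵐᵒᵖ) * op e = op (e * y) := rfl
    rw [this]
    rfl

lemma ddInner_mem (r : A ⊗[k] Aᵐᵒᵖ) (Θ : ↥(DDer k A)) :
    ddInner r (Θ : A →ₗ[k] A ⊗[k] A) ∈ DDer k A := by
  induction r with
  | zero =>
    have : ddInner (0 : A ⊗[k] Aᵐᵒᵖ) (Θ : A →ₗ[k] A ⊗[k] A) = 0 := by
      ext a; simp [ddInner_apply]
    rw [this]; exact Submodule.zero_mem _
  | add r₁ r₂ h1 h2 =>
    have : ddInner (r₁ + r₂) (Θ : A →ₗ[k] A ⊗[k] A)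
        = ddInner r₁ (Θ : A →ₗ[k] A ⊗[k] A) + ddInner r₂ (Θ : A →ₗ[k] A ⊗[k] A) := by
      ext a; simp [ddInner_apply, mul_add]
    rw [this]; exact Submodule.add_mem _ h1 h2
  | tmul c e =>
    have : ddInner (c ⊗ₜ[k] e) (Θ : A →ₗ[k] A ⊗[k] A)
        = ((innerDL k A (unop e) (innerDR k A c Θ) : ↥(DDer k A)) : A →ₗ[k] A ⊗[k] A) := by
      ext a
      rw [ddInner_apply, show (e : Aᵐᵒᵖ) = op (unop e) by simp, ddInner_tmul]
      rfl
    rw [this]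
    exact Submodule.coe_mem _

/-- `ddInner` bundled as an element of `DDer`, linearly in `r`. -/
noncomputable def ddInnerL (Θ : ↥(DDer k A)) : (A ⊗[k] Aᵐᵒᵖ) →ₗ[k] ↥(DDer k A) where
  toFun r := ⟨ddInner r (Θ : A →ₗ[k] A ⊗[k] A), ddInner_mem r Θ⟩
  map_add' r₁ r₂ := by
    apply Subtype.ext; apply LinearMap.ext; intro a
    simp [ddInner_apply, mul_add]
  map_smul' c r := by
    apply Subtype.ext; apply LinearMap.ext; intro a
    simp [ddInner_apply, mul_smul_comm]

end KRAuxC2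

section KRAuxD

open MulOpposite TrivSqZeroExt

variable {k : Type u} [Field k] {A : Type u} [Ring A] [Algebra k A]
variable {n : ℕ} {AV : Type u} [CommRing AV] [Algebra k AV]
variable (π : A →ₐ[k] Matrix (Fin n) (Fin n) AV)

/-- The algebra map `AV → AV[ε]` attached to a derivation. -/
noncomputable def derivToDual (D : Derivation k AV AV) : AV →ₐ[k] DualNumber AV :=
  AlgHom.ofLinearMap
    ({ toFun := fun x => inl x + inr (D x)
       map_add' := fun x y => by
         apply TrivSqZeroExt.ext <;> simp
       map_smul' := fun c x => by
         apply TrivSqZeroExt.ext <;> simp } : AV →ₗ[k] DualNumber AV)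
    (by apply TrivSqZeroExt.ext <;> simp)
    (by
      intro x y
      apply TrivSqZeroExt.ext
      · simp [LinearMap.coe_mk, AddHom.coe_mk, fst_mul]
      · simp only [LinearMap.coe_mk, AddHom.coe_mk, snd_add, snd_inl, snd_inr, snd_mul,
          fst_add, fst_inl, fst_inr, zero_add, add_zero, op_smul_eq_smul, smul_eq_mul,
          Derivation.leibniz]
        try ring)

lemma derivToDual_apply (D : Derivation k AV AV) (x : AV) :
    derivToDual D x = inl x + inr (D x) := rfl

lemma deriv_ext_of_rep
    (huniv : ∀ (B : Type u) [CommRing B] [Algebra k B],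
      Function.Bijective (fun φ : AV →ₐ[k] B => (AlgHom.mapMatrix φ).comp π))
    (D₁ D₂ : Derivation k AV AV) (h : ∀ (a : A) (i j : Fin n), D₁ (π a i j) = D₂ (π a i j)) :
    D₁ = D₂ := by
  have h1 : derivToDual D₁ = derivToDual D₂ := by
    apply (huniv (DualNumber AV)).1
    ext a : 1
    simp only [AlgHom.comp_apply, AlgHom.mapMatrix_apply]
    refine Matrix.ext fun i j => ?_
    simp only [Matrix.map_apply, derivToDual_apply, h a i j]
  ext x
  have := congrArg (fun φ : AV →ₐ[k] DualNumber AV => (φ x).snd) h1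
  simpa [derivToDual_apply] using this

lemma exists_deriv_of_pider
    (huniv : ∀ (B : Type u) [CommRing B] [Algebra k B],
      Function.Bijective (fun φ : AV →ₐ[k] B => (AlgHom.mapMatrix φ).comp π))
    (E : A →ₗ[k] Matrix (Fin n) (Fin n) AV)
    (hE : ∀ x y : A, E (x * y) = π x * E y + E x * π y) :
    ∃ D : Derivation k AV AV, ∀ (a : A) (i j : Fin n), D (π a i j) = E a i j := by
  -- the algebra homomorphism `A → Mat_n(AV[ε])`
  have hL : ∀ (a b : A),
      (Matrix.of fun i j => (inl (π (a*b) i j) + inr (E (a*b) i j) : DualNumber AV))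
        = (Matrix.of fun i j => (inl (π a i j) + inr (E a i j) : DualNumber AV))
          * (Matrix.of fun i j => (inl (π b i j) + inr (E b i j) : DualNumber AV)) := by
    intro a b
    refine Matrix.ext fun i j => ?_
    rw [Matrix.mul_apply]
    apply TrivSqZeroExt.ext
    · rw [fst_sum]
      simp only [Matrix.of_apply, fst_mul, fst_add, fst_inl, fst_inr, add_zero, zero_add,
        snd_add, snd_inl, snd_inr]
      rw [map_mul π a b, Matrix.mul_apply]
    · rw [snd_sum]
      simp only [Matrix.of_apply, snd_mul, fst_add, fst_inl, fst_inr, snd_add, snd_inl,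
        snd_inr, add_zero, zero_add, op_smul_eq_smul, smul_eq_mul]
      rw [hE a b, Matrix.add_apply, Matrix.mul_apply, Matrix.mul_apply,
        ← Finset.sum_add_distrib]
      exact Finset.sum_congr rfl fun l _ => by ring
  let Λ : A →ₐ[k] Matrix (Fin n) (Fin n) (DualNumber AV) :=
    AlgHom.ofLinearMap
      ({ toFun := fun a => Matrix.of fun i j => (inl (π a i j) + inr (E a i j) : DualNumber AV)
         map_add' := fun a b => by
           refine Matrix.ext fun i j => ?_
           apply TrivSqZeroExt.ext <;>
             simp [Matrix.add_apply]
         map_smul' := fun c a => by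
           refine Matrix.ext fun i j => ?_
           apply TrivSqZeroExt.ext <;>
             simp [Matrix.smul_apply] } : A →ₗ[k] Matrix (Fin n) (Fin n) (DualNumber AV))
      (by
        have hE1 : E (1 : A) = 0 := by
          have h0 := hE 1 1
          rw [one_mul, show (π (1:A)) = 1 from map_one π, one_mul, mul_one] at h0
          exact (left_eq_add.mp h0)
        show (Matrix.of fun i j => (inl (π (1:A) i j) + inr (E (1:A) i j) : DualNumber AV)) = 1
        refine Matrix.ext fun i j => ?_
        rw [Matrix.of_apply, map_one, hE1]
        by_cases hij : i = j
        · subst hij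
          simp [Matrix.one_apply_eq]
        · simp [Matrix.one_apply_ne hij])
      (fun a b => hL a b)
  obtain ⟨ψ, hψ⟩ := (huniv (DualNumber AV)).2 Λ
  have hψa : ∀ a : A, (AlgHom.mapMatrix ψ) (π a) = Λ a := fun a => AlgHom.congr_fun hψ a
  have hentry : ∀ (a : A) (i j : Fin n),
      ψ (π a i j) = (inl (π a i j) + inr (E a i j) : DualNumber AV) := by
    intro a i j
    have h3 := congrFun (congrFun (hψa a) i) j
    simpa [AlgHom.mapMatrix_apply, Matrix.map_apply, Λ, AlgHom.ofLinearMap_apply] using h3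
  have hfst : ∀ x : AV, (ψ x).fst = x := by
    have h1 : (TrivSqZeroExt.fstHom k AV AV).comp ψ = AlgHom.id k AV := by
      apply (huniv AV).1
      ext a : 1
      simp only [AlgHom.comp_apply, AlgHom.mapMatrix_apply]
      refine Matrix.ext fun i j => ?_
      simp only [Matrix.map_apply, AlgHom.coe_comp, Function.comp_apply, AlgHom.coe_id, id_eq]
      rw [hentry a i j]
      simp
    intro x
    exact AlgHom.congr_fun h1 x
  refine ⟨{ toLinearMap := (TrivSqZeroExt.sndHom AV AV).restrictScalars k ∘ₗ ψ.toLinearMap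
            map_one_eq_zero' := by simp
            leibniz' := by
              intro x y
              simp only [LinearMap.comp_apply, LinearMap.coe_restrictScalars,
                AlgHom.toLinearMap_apply, sndHom_apply, map_mul, snd_mul, hfst,
                op_smul_eq_smul]
          }, ?_⟩
  intro a i j
  show (TrivSqZeroExt.sndHom AV AV) (ψ (π a i j)) = E a i j
  rw [hentry a i j]
  simp

end KRAuxD

section KRAuxE1

open MulOpposite

variable {k : Type u} [Field k] {A : Type u} [Ring A] [Algebra k A]
variable {n : ℕ} {AV : Type u} [CommRing AV] [Algebra k AV]
variable (π : A →ₐ[k] Matrix (Fin n) (Fin n) AV)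
variable (huniv : ∀ (B : Type u) [CommRing B] [Algebra k B],
  Function.Bijective (fun φ : AV →ₐ[k] B => (AlgHom.mapMatrix φ).comp π))

lemma EThetaPider (Θ : ↥(DDer k A)) (p q : Fin n) (x y : A) :
    (matE π p q ∘ₗ (Θ : A →ₗ[k] A ⊗[k] A)) (x * y)
      = π x * (matE π p q ∘ₗ (Θ : A →ₗ[k] A ⊗[k] A)) y
        + (matE π p q ∘ₗ (Θ : A →ₗ[k] A ⊗[k] A)) x * π y := by
  simp only [LinearMap.comp_apply]
  rw [Θ.2 x y, map_add, matE_map_mulLeft, matE_map_mulRight]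

/-- The derivation `D_Θ^{pq}` of `AV` attached to a double derivation. -/
noncomputable def DD (Θ : ↥(DDer k A)) (p q : Fin n) : Derivation k AV AV :=
  (exists_deriv_of_pider π huniv (matE π p q ∘ₗ (Θ : A →ₗ[k] A ⊗[k] A))
    (EThetaPider π Θ p q)).choose

lemma DD_spec (Θ : ↥(DDer k A)) (p q : Fin n) (a : A) (i j : Fin n) :
    DD π huniv Θ p q (π a i j) = matE π p q ((Θ : A →ₗ[k] A ⊗[k] A) a) i j :=
  (exists_deriv_of_pider π huniv (matE π p q ∘ₗ (Θ : A →ₗ[k] A ⊗[k] A))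
    (EThetaPider π Θ p q)).choose_spec a i j

/-- A finite-sum evaluation lemma for derivations. -/
lemma deriv_sum_apply {ι : Type*} (t : Finset ι) (D : ι → Derivation k AV AV) (x : AV) :
    (∑ i ∈ t, D i) x = ∑ i ∈ t, D i x := by
  induction t using Finset.cons_induction with
  | empty => simp
  | cons a s ha ih => rw [Finset.sum_cons, Finset.sum_cons, Derivation.add_apply, ih]

lemma DD_add (Θ₁ Θ₂ : ↥(DDer k A)) (p q : Fin n) :
    DD π huniv (Θ₁ + Θ₂) p q = DD π huniv Θ₁ p q + DD π huniv Θ₂ p q := by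
  apply deriv_ext_of_rep π huniv
  intro a i j
  rw [Derivation.add_apply, DD_spec, DD_spec, DD_spec]
  simp [Matrix.add_apply]

lemma DD_ksmul (c : k) (Θ : ↥(DDer k A)) (p q : Fin n) :
    DD π huniv (c • Θ) p q = c • DD π huniv Θ p q := by
  apply deriv_ext_of_rep π huniv
  intro a i j
  rw [Derivation.smul_apply, DD_spec, DD_spec]
  simp [Matrix.smul_apply]

lemma DD_innerDL (a : A) (Θ : ↥(DDer k A)) (p q : Fin n) :
    DD π huniv (innerDL k A a Θ) p q = ∑ l, π a p l • DD π huniv Θ l q := by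
  apply deriv_ext_of_rep π huniv
  intro x i j
  rw [DD_spec, deriv_sum_apply]
  have hval : ((innerDL k A a Θ : ↥(DDer k A)) : A →ₗ[k] A ⊗[k] A) x
      = TensorProduct.map LinearMap.id (LinearMap.mulLeft k a)
          ((Θ : A →ₗ[k] A ⊗[k] A) x) := rfl
  rw [hval, matE_inner_left]
  rw [Matrix.sum_apply]
  refine Finset.sum_congr rfl fun l _ => ?_
  rw [Derivation.smul_apply, DD_spec]
  simp [Matrix.smul_apply]

lemma DD_innerDR (b : A) (Θ : ↥(DDer k A)) (p q : Fin n) :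
    DD π huniv (innerDR k A b Θ) p q = ∑ l, π b l q • DD π huniv Θ p l := by
  apply deriv_ext_of_rep π huniv
  intro x i j
  rw [DD_spec, deriv_sum_apply]
  have hval : ((innerDR k A b Θ : ↥(DDer k A)) : A →ₗ[k] A ⊗[k] A) x
      = TensorProduct.map (LinearMap.mulRight k b) LinearMap.id
          ((Θ : A →ₗ[k] A ⊗[k] A) x) := rfl
  rw [hval, matE_inner_right]
  rw [Matrix.sum_apply]
  refine Finset.sum_congr rfl fun l _ => ?_
  rw [Derivation.smul_apply, DD_spec]
  simp [Matrix.smul_apply]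

end KRAuxE1

section KRAuxE2

open MulOpposite

variable {k : Type u} [Field k] {A : Type u} [Ring A] [Algebra k A]
variable {n : ℕ} {AV : Type u} [CommRing AV] [Algebra k AV]
variable (π : A →ₐ[k] Matrix (Fin n) (Fin n) AV)
variable (huniv : ∀ (B : Type u) [CommRing B] [Algebra k B],
  Function.Bijective (fun φ : AV →ₐ[k] B => (AlgHom.mapMatrix φ).comp π))

/-- The map `Φ_L` from `AV`-linear maps on derivations to `A`-bimodule maps. -/
noncomputable def PhiF (L : ModPkg k AV) (g : Derivation k AV AV →ₗ[AV] L.carrier) :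
    ↥(DDer k A) →ₗ[k] Matrix (Fin n) (Fin n) L.carrier where
  toFun Θ := Matrix.of fun p q => g (DD π huniv Θ p q)
  map_add' Θ₁ Θ₂ := by
    refine Matrix.ext fun p q => ?_
    simp only [Matrix.of_apply, Matrix.add_apply, DD_add, map_add]
  map_smul' c Θ := by
    refine Matrix.ext fun p q => ?_
    simp only [Matrix.of_apply, Matrix.smul_apply, RingHom.id_apply, DD_ksmul]
    rw [← algebraMap_smul AV c (DD π huniv Θ p q), map_smul, algebraMap_smul]

lemma PhiF_apply (L : ModPkg k AV) (g : Derivation k AV AV →ₗ[AV] L.carrier)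
    (Θ : ↥(DDer k A)) (p q : Fin n) :
    PhiF π huniv L g Θ p q = g (DD π huniv Θ p q) := rfl

lemma PhiF_isVdB (L : ModPkg k AV) (g : Derivation k AV AV →ₗ[AV] L.carrier) :
    IsVdBHom π L (PhiF π huniv L g) := by
  constructor
  · intro a Θ
    refine Matrix.ext fun p q => ?_
    show g (DD π huniv (innerDL k A a Θ) p q) = _
    rw [DD_innerDL π huniv, map_sum]
    show _ = ∑ l, π a p l • (PhiF π huniv L g Θ) l q
    exact Finset.sum_congr rfl fun l _ => by rw [map_smul]; rfl
  · intro b Θ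
    refine Matrix.ext fun p q => ?_
    show g (DD π huniv (innerDR k A b Θ) p q) = _
    rw [DD_innerDR π huniv, map_sum]
    show _ = ∑ l, π b l q • (PhiF π huniv L g Θ) p l
    exact Finset.sum_congr rfl fun l _ => by rw [map_smul]; rfl

lemma phiD_Dadd (D₁ D₂ : Derivation k AV AV) (r : A ⊗[k] Aᵐᵒᵖ) :
    phiD π (D₁ + D₂) r = phiD π D₁ r + phiD π D₂ r := by
  induction r with
  | zero => simp
  | add r₁ r₂ h1 h2 => simp only [map_add, h1, h2]; abel
  | tmul u v =>
    rw [phiD_tmul, phiD_tmul, phiD_tmul]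
    ext i j
    simp only [Matrix.add_apply, Matrix.mul_apply, matDeriv_apply, Derivation.add_apply,
      add_mul, Finset.sum_add_distrib]

lemma phiD_Dsmul (c : AV) (D : Derivation k AV AV) (r : A ⊗[k] Aᵐᵒᵖ) :
    phiD π (c • D) r = c • phiD π D r := by
  induction r with
  | zero => simp
  | add r₁ r₂ h1 h2 => simp only [map_add, h1, h2, smul_add]
  | tmul u v =>
    rw [phiD_tmul, phiD_tmul]
    ext i j
    simp only [Matrix.smul_apply, Matrix.mul_apply, matDeriv_apply, Derivation.smul_apply,
      smul_eq_mul, Finset.mul_sum]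
    exact Finset.sum_congr rfl fun l _ => by ring

/-- `Θ_s`, the double derivation attached to a dual-basis functional. -/
noncomputable def ThetaS
    (f : (LinearMap.ker (envMul k A)) →ₗ[A ⊗[k] Aᵐᵒᵖ] (A ⊗[k] Aᵐᵒᵖ)) : ↥(DDer k A) :=
  ⟨dualToDDerMap k A f, dualToDDerMap_mem k A f⟩

/-- Decomposition of `δ a` along a dual basis, in `Aᵉ`. -/
lemma delL_decomp {m : ℕ} (ω : Fin m → (LinearMap.ker (envMul k A)))
    (f : Fin m → ((LinearMap.ker (envMul k A)) →ₗ[A ⊗[k] Aᵐᵒᵖ] (A ⊗[k] Aᵐᵒᵖ)))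
    (hdual : ∀ x : (LinearMap.ker (envMul k A)), ∑ s, f s x • ω s = x) (a : A) :
    delL k A a = ∑ s, (f s (delOmega k A a)) * ((ω s : A ⊗[k] Aᵐᵒᵖ)) := by
  have h := congrArg (Subtype.val) (hdual (delOmega k A a)).symm
  have e : ((delOmega k A a : LinearMap.ker (envMul k A)) : A ⊗[k] Aᵐᵒᵖ) = delL k A a := rfl
  simpa [AddSubmonoidClass.coe_finset_sum, SetLike.val_smul, smul_eq_mul, e] using h

/-- KEY 1: every derivation of `AV` is an `AV`-combination of the `D_Θ^{pq}`. -/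
lemma spanD {m : ℕ} (ω : Fin m → (LinearMap.ker (envMul k A)))
    (f : Fin m → ((LinearMap.ker (envMul k A)) →ₗ[A ⊗[k] Aᵐᵒᵖ] (A ⊗[k] Aᵐᵒᵖ)))
    (hdual : ∀ x : (LinearMap.ker (envMul k A)), ∑ s, f s x • ω s = x)
    (D : Derivation k AV AV) :
    D = ∑ s, ∑ p, ∑ q,
      (phiD π D (ω s : A ⊗[k] Aᵐᵒᵖ)) q p • DD π huniv (ThetaS (f s)) p q := by
  apply deriv_ext_of_rep π huniv
  intro a i j
  have h1 : D (π a i j) = phiD π D (delL k A a) i j := by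
    rw [phiD_delL, matDeriv_apply]
  rw [h1, delL_decomp ω f hdual a, map_sum, deriv_sum_apply, Matrix.sum_apply]
  refine Finset.sum_congr rfl fun s _ => ?_
  rw [phiD_key π D _ _ (ω s).2]
  have h2 : f s (delOmega k A a)
      = tauEnv k A (((ThetaS (f s) : ↥(DDer k A)) : A →ₗ[k] A ⊗[k] A) a) := by
    rw [show (((ThetaS (f s) : ↥(DDer k A)) : A →ₗ[k] A ⊗[k] A)) = dualToDDerMap k A (f s)
      from rfl, tauEnv_dualToDDerMap]
  rw [h2, zetaS_tau, deriv_sum_apply, Matrix.sum_apply]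
  refine Finset.sum_congr rfl fun p _ => ?_
  rw [deriv_sum_apply, Matrix.sum_apply]
  refine Finset.sum_congr rfl fun q _ => ?_
  rw [Derivation.smul_apply, DD_spec]
  simp [Matrix.smul_apply, smul_eq_mul]

/-- CLAIM A: `φ_{D_Θ^{pq}} = matE^{pq} ∘ τ⁻¹ ∘ h_Θ`. -/
lemma phiD_DD (Θ : ↥(DDer k A)) (p q : Fin n) (r : A ⊗[k] Aᵐᵒᵖ) :
    phiD π (DD π huniv Θ p q) r
      = matE π p q ((tauEnv k A).symm (hTheta (Θ : A →ₗ[k] A ⊗[k] A) r)) := by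
  induction r with
  | zero => simp
  | add r₁ r₂ h1 h2 => simp only [map_add, h1, h2]
  | tmul u v =>
    rw [phiD_tmul, hTheta_tmul]
    have hv : (tauEnv k A).symm ((1 ⊗ₜ[k] v) * tauEnv k A ((Θ : A →ₗ[k] A ⊗[k] A) u))
        = TensorProduct.map LinearMap.id (LinearMap.mulRight k (unop v))
            ((Θ : A →ₗ[k] A ⊗[k] A) u) := by
      rw [show (v : Aᵐᵒᵖ) = op (unop v) from rfl, ← tauEnv_map_mulRight,
        LinearEquiv.symm_apply_apply]
      rfl
    rw [hv, matE_map_mulRight]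
    ext i j
    rw [Matrix.mul_apply, Matrix.mul_apply]
    refine Finset.sum_congr rfl fun l _ => ?_
    rw [matDeriv_apply, DD_spec]

/-- KEY 2: the dual-basis decomposition of a double derivation under the inner action. -/
lemma key2 {m : ℕ} (ω : Fin m → (LinearMap.ker (envMul k A)))
    (f : Fin m → ((LinearMap.ker (envMul k A)) →ₗ[A ⊗[k] Aᵐᵒᵖ] (A ⊗[k] Aᵐᵒᵖ)))
    (hdual : ∀ x : (LinearMap.ker (envMul k A)), ∑ s, f s x • ω s = x)
    (Θ : ↥(DDer k A)) :
    Θ = ∑ s, ddInnerL (ThetaS (f s))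
          (hTheta (Θ : A →ₗ[k] A ⊗[k] A) (ω s : A ⊗[k] Aᵐᵒᵖ)) := by
  apply Subtype.ext; apply LinearMap.ext; intro a
  apply (tauEnv k A).injective
  have lhs : tauEnv k A ((Θ : A →ₗ[k] A ⊗[k] A) a)
      = ∑ s, (f s (delOmega k A a)) * hTheta (Θ : A →ₗ[k] A ⊗[k] A) (ω s : A ⊗[k] Aᵐᵒᵖ) := by
    rw [← hTheta_delL (Θ : A →ₗ[k] A ⊗[k] A) Θ.2 a, delL_decomp ω f hdual a, map_sum]
    exact Finset.sum_congr rfl fun s _ =>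
      hTheta_key (Θ : A →ₗ[k] A ⊗[k] A) Θ.2 _ _ (ω s).2
  rw [lhs]
  have rhs : ((((∑ s, ddInnerL (ThetaS (f s))
        (hTheta (Θ : A →ₗ[k] A ⊗[k] A) (ω s : A ⊗[k] Aᵐᵒᵖ))) : ↥(DDer k A)))
          : A →ₗ[k] A ⊗[k] A) a
      = ∑ s, ddInner (hTheta (Θ : A →ₗ[k] A ⊗[k] A) (ω s : A ⊗[k] Aᵐᵒᵖ))
          ((ThetaS (f s) : ↥(DDer k A)) : A →ₗ[k] A ⊗[k] A) a := by
    rw [AddSubmonoidClass.coe_finset_sum, LinearMap.sum_apply]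
    rfl
  rw [rhs, map_sum]
  refine Finset.sum_congr rfl fun s _ => ?_
  rw [ddInner_apply, LinearEquiv.apply_symm_apply]
  congr 1
  rw [show (((ThetaS (f s) : ↥(DDer k A)) : A →ₗ[k] A ⊗[k] A)) = dualToDDerMap k A (f s)
    from rfl, tauEnv_dualToDDerMap]

end KRAuxE2

section KRAuxE3

open MulOpposite

variable {k : Type u} [Field k] {A : Type u} [Ring A] [Algebra k A]
variable {n : ℕ} {AV : Type u} [CommRing AV] [Algebra k AV]
variable (π : A →ₐ[k] Matrix (Fin n) (Fin n) AV)
variable (huniv : ∀ (B : Type u) [CommRing B] [Algebra k B],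
  Function.Bijective (fun φ : AV →ₐ[k] B => (AlgHom.mapMatrix φ).comp π))

lemma F_ddInner (L : ModPkg k AV)
    (F : {F : ↥(DDer k A) →ₗ[k] Matrix (Fin n) (Fin n) L.carrier // IsVdBHom π L F})
    (Θ' : ↥(DDer k A)) (r : A ⊗[k] Aᵐᵒᵖ) (p q : Fin n) :
    F.1 (ddInnerL Θ' r) p q
      = ∑ p', ∑ q', (matE π p q ((tauEnv k A).symm r)) q' p' • F.1 Θ' p' q' := by
  induction r with
  | zero => simp [map_zero, Matrix.zero_apply]
  | add r₁ r₂ h1 h2 =>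
    rw [map_add, map_add, Matrix.add_apply, h1, h2, map_add, ← Finset.sum_add_distrib]
    refine Finset.sum_congr rfl fun p' _ => ?_
    rw [← Finset.sum_add_distrib]
    refine Finset.sum_congr rfl fun q' _ => ?_
    rw [map_add, Matrix.add_apply, add_smul]
  | tmul c v =>
    have hdd : ddInnerL Θ' (c ⊗ₜ[k] v) = innerDL k A (unop v) (innerDR k A c Θ') := by
      apply Subtype.ext; apply LinearMap.ext; intro a
      show ddInner (c ⊗ₜ[k] v) (Θ' : A →ₗ[k] A ⊗[k] A) a = _
      rw [ddInner_apply, show (v : Aᵐᵒᵖ) = op (unop v) from rfl, ddInner_tmul]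
      rfl
    rw [hdd, F.2.1, F.2.2]
    have htau : (tauEnv k A).symm (c ⊗ₜ[k] v) = c ⊗ₜ[k] (unop v) := rfl
    rw [htau]
    show ∑ l, π (unop v) p l • (matRSmul (F.1 Θ') (π c)) l q = _
    refine Finset.sum_congr rfl fun p' _ => ?_
    show π (unop v) p p' • ∑ l, π c l q • F.1 Θ' p' l = _
    rw [Finset.smul_sum]
    refine Finset.sum_congr rfl fun q' _ => ?_
    rw [matE_tmul, smul_smul, mul_comm (π (unop v) p p') (π c q' q)]

/-- The candidate preimage `g_F`. -/
noncomputable def gF {m : ℕ} (ω : Fin m → (LinearMap.ker (envMul k A)))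
    (f : Fin m → ((LinearMap.ker (envMul k A)) →ₗ[A ⊗[k] Aᵐᵒᵖ] (A ⊗[k] Aᵐᵒᵖ)))
    (L : ModPkg k AV)
    (F : {F : ↥(DDer k A) →ₗ[k] Matrix (Fin n) (Fin n) L.carrier // IsVdBHom π L F}) :
    Derivation k AV AV →ₗ[AV] L.carrier where
  toFun D := ∑ s, ∑ p, ∑ q,
    (phiD π D (ω s : A ⊗[k] Aᵐᵒᵖ)) q p • (F.1 (ThetaS (f s))) p q
  map_add' D₁ D₂ := by
    rw [← Finset.sum_add_distrib]
    refine Finset.sum_congr rfl fun s _ => ?_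
    rw [← Finset.sum_add_distrib]
    refine Finset.sum_congr rfl fun p _ => ?_
    rw [← Finset.sum_add_distrib]
    refine Finset.sum_congr rfl fun q _ => ?_
    rw [phiD_Dadd, Matrix.add_apply, add_smul]
  map_smul' c D := by
    simp only [RingHom.id_apply]
    rw [Finset.smul_sum]
    refine Finset.sum_congr rfl fun s _ => ?_
    rw [Finset.smul_sum]
    refine Finset.sum_congr rfl fun p _ => ?_
    rw [Finset.smul_sum]
    refine Finset.sum_congr rfl fun q _ => ?_
    rw [phiD_Dsmul, Matrix.smul_apply, smul_eq_mul, mul_smul]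

lemma gF_spec {m : ℕ} (ω : Fin m → (LinearMap.ker (envMul k A)))
    (f : Fin m → ((LinearMap.ker (envMul k A)) →ₗ[A ⊗[k] Aᵐᵒᵖ] (A ⊗[k] Aᵐᵒᵖ)))
    (hdual : ∀ x : (LinearMap.ker (envMul k A)), ∑ s, f s x • ω s = x)
    (L : ModPkg k AV)
    (F : {F : ↥(DDer k A) →ₗ[k] Matrix (Fin n) (Fin n) L.carrier // IsVdBHom π L F}) :
    PhiF π huniv L (gF π ω f L F) = F.1 := by
  apply LinearMap.ext; intro Θ
  refine Matrix.ext fun p q => ?_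
  rw [PhiF_apply]
  show (∑ s, ∑ p', ∑ q',
    (phiD π (DD π huniv Θ p q) (ω s : A ⊗[k] Aᵐᵒᵖ)) q' p' • (F.1 (ThetaS (f s))) p' q')
      = F.1 Θ p q
  have step1 : ∀ s : Fin m, (∑ p', ∑ q',
      (phiD π (DD π huniv Θ p q) (ω s : A ⊗[k] Aᵐᵒᵖ)) q' p' • (F.1 (ThetaS (f s))) p' q')
        = F.1 (ddInnerL (ThetaS (f s))
            (hTheta (Θ : A →ₗ[k] A ⊗[k] A) (ω s : A ⊗[k] Aᵐᵒᵖ))) p q := by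
    intro s
    rw [F_ddInner]
    refine Finset.sum_congr rfl fun p' _ => Finset.sum_congr rfl fun q' _ => ?_
    rw [phiD_DD]
  rw [Finset.sum_congr rfl fun s _ => step1 s]
  have step2 : (∑ s, F.1 (ddInnerL (ThetaS (f s))
      (hTheta (Θ : A →ₗ[k] A ⊗[k] A) (ω s : A ⊗[k] Aᵐᵒᵖ)))) p q = F.1 Θ p q := by
    rw [← map_sum, ← key2 ω f hdual Θ]
  rw [← step2, Matrix.sum_apply]

end KRAuxE3

/-- Naturality of `Φ`. -/
lemma PhiF_natural {k : Type u} [Field k] {A : Type u} [Ring A] [Algebra k A]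
    {n : ℕ} {AV : Type u} [CommRing AV] [Algebra k AV]
    (π : A →ₐ[k] Matrix (Fin n) (Fin n) AV)
    (huniv : ∀ (B : Type u) [CommRing B] [Algebra k B],
      Function.Bijective (fun φ : AV →ₐ[k] B => (AlgHom.mapMatrix φ).comp π))
    (L L' : ModPkg k AV) (h : L.carrier →ₗ[AV] L'.carrier)
    (g : Derivation k AV AV →ₗ[AV] L.carrier) :
    pushVdB π h ⟨PhiF π huniv L g, PhiF_isVdB π huniv L g⟩
      = ⟨PhiF π huniv L' (h ∘ₗ g), PhiF_isVdB π huniv L' (h ∘ₗ g)⟩ := by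
  apply Subtype.ext
  apply LinearMap.ext; intro Θ
  refine Matrix.ext fun p q => ?_
  show ((h.restrictScalars k).mapMatrix) (PhiF π huniv L g Θ) p q = _
  rw [LinearMap.mapMatrix_apply, Matrix.map_apply, PhiF_apply, PhiF_apply]
  rfl

/-- The Kontsevich–Rosenberg principle for double derivations, via the Van den Bergh
functor: for smooth `A`, `(𝔻er A)_V ≅ Der(A_V)`, expressed as a family of bijections
between `A`-bimodule maps `𝔻er A → Mat_n(L)` and `A_V`-linear maps `Der_k(A_V) → L`,
natural in the `A_V`-module `L`. -/
theorem double_derivations_KR_principle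
    (k : Type u) [Field k] (A : Type u) [Ring A] [Algebra k A]
    -- `A` is smooth over `k`:
    [Algebra.FiniteType k A]
    (hsmooth : Module.Projective (A ⊗[k] Aᵐᵒᵖ)
      (LinearMap.ker (envMul k A)))
    (n : ℕ) (hn : 1 ≤ n)
    (AV : Type u) [CommRing AV] [Algebra k AV]
    (π : A →ₐ[k] Matrix (Fin n) (Fin n) AV)
    -- `(AV, π)` is a universal n-dimensional representation of `A`:
    (huniv : ∀ (B : Type u) [CommRing B] [Algebra k B],
      Function.Bijective (fun φ : AV →ₐ[k] B => (AlgHom.mapMatrix φ).comp π)) :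
    ∃ Ψ : (L : ModPkg k AV) →
        {F : DDer k A →ₗ[k] Matrix (Fin n) (Fin n) L.carrier // IsVdBHom π L F} →
        (Derivation k AV AV →ₗ[AV] L.carrier),
      (∀ L : ModPkg k AV, Function.Bijective (Ψ L)) ∧
      (∀ (L L' : ModPkg k AV) (h : L.carrier →ₗ[AV] L'.carrier)
          (F : {F : DDer k A →ₗ[k] Matrix (Fin n) (Fin n) L.carrier // IsVdBHom π L F}),
        Ψ L' (pushVdB π h F) = h ∘ₗ Ψ L F) := by
  obtain ⟨m, ω, f, hdual⟩ := exists_dual_basis k A hsmooth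
  have hbij : ∀ L : ModPkg k AV,
      Function.Bijective (fun g : Derivation k AV AV →ₗ[AV] L.carrier =>
        (⟨PhiF π huniv L g, PhiF_isVdB π huniv L g⟩ :
          {F : DDer k A →ₗ[k] Matrix (Fin n) (Fin n) L.carrier // IsVdBHom π L F})) := by
    intro L
    constructor
    · intro g₁ g₂ hg
      have h' : ∀ (Θ : ↥(DDer k A)) (p q : Fin n),
          g₁ (DD π huniv Θ p q) = g₂ (DD π huniv Θ p q) := by
        intro Θ p q
        exact congrArg (fun F => F.1 Θ p q) hg
      apply LinearMap.ext; intro D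
      rw [spanD π huniv ω f hdual D, map_sum, map_sum]
      refine Finset.sum_congr rfl fun s _ => ?_
      rw [map_sum, map_sum]
      refine Finset.sum_congr rfl fun p _ => ?_
      rw [map_sum, map_sum]
      refine Finset.sum_congr rfl fun q _ => ?_
      rw [map_smul, map_smul, h']
    · intro F
      exact ⟨gF π ω f L F, Subtype.ext (gF_spec π huniv ω f hdual L F)⟩
  let e : (L : ModPkg k AV) → (Derivation k AV AV →ₗ[AV] L.carrier) ≃
      {F : DDer k A →ₗ[k] Matrix (Fin n) (Fin n) L.carrier // IsVdBHom π L F} :=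
    fun L => Equiv.ofBijective _ (hbij L)
  refine ⟨fun L => (e L).symm, fun L => (e L).symm.bijective, ?_⟩
  intro L L' h F
  apply (e L').injective
  rw [Equiv.apply_symm_apply]
  have hF : F = ⟨PhiF π huniv L ((e L).symm F), PhiF_isVdB π huniv L ((e L).symm F)⟩ :=
    ((e L).apply_symm_apply F).symm
  conv_lhs => rw [hF]
  rw [PhiF_natural π huniv L L' h ((e L).symm F)]
  rfl
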